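/- Assume Property 3. Let Γ' be the directed graph whose vertices are the strongly connected components of Γ, with an edge from component S to component S' (for S ≠ S') whenever some fast reaction in R has its reactant in S and at least one product in S'. Then Γ' contains no directed cycle; that is, Γ' is a directed acyclic graph. -/

import Mathlib

/-- A reaction: a pair (reactants, products) of finite multisets of complexes. -/
abbrev Rxn (C : Type*) := Multiset C × Multiset C

variable {C : Type*}

/-- Edge of the fast-reaction digraph Γ: a fast (1,1) reaction ({x}, {y}) in R. -/
def FastEdge (R : Set (Rxn C)) (x y : C) : Prop :=
  ((({x} : Multiset C), ({y} : Multiset C)) : Rxn C) ∈ R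

/-- Reachability along Γ. -/
def Reach (R : Set (Rxn C)) : C → C → Prop :=
  Relation.ReflTransGen (FastEdge R)

/-- The strongly connected component of Γ containing x. -/
def scc (R : Set (Rxn C)) (x : C) : Set C :=
  {y | Reach R x y ∧ Reach R y x}

/-- Q is a resting set: an SCC of Γ all of whose outgoing fast reactions stay in Q. -/
def IsRestingSet (R : Set (Rxn C)) (Q : Set C) : Prop :=
  (∃ x, Q = scc R x) ∧
    ∀ r ∈ R, r.1.card = 1 → (∀ a ∈ r.1, a ∈ Q) → ∀ b ∈ r.2, b ∈ Q

/-- x is a resting complex: a member of some resting set. -/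
def RestingComplex (R : Set (Rxn C)) (x : C) : Prop :=
  ∃ Q, IsRestingSet R Q ∧ x ∈ Q

/-- One step of a fast transition: replace one occurrence of x by the products of a
fast reaction ({x}, P) ∈ R. -/
def FastStep (R : Set (Rxn C)) (M N : Multiset C) : Prop :=
  ∃ (x : C) (P M' : Multiset C),
    ((({x} : Multiset C), P) : Rxn C) ∈ R ∧ M = x ::ₘ M' ∧ N = P + M'

/-- A fast transition: finitely many fast steps. -/
def FastTransition (R : Set (Rxn C)) : Multiset C → Multiset C → Prop :=
  Relation.ReflTransGen (FastStep R)

/-- The fate predicate Fate(x, F), for x a complex and F a finite multiset of resting sets. -/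
inductive Fate (R : Set (Rxn C)) : C → Multiset (Set C) → Prop
  | resting (x : C) (h : IsRestingSet R (scc R x)) :
      Fate R x {scc R x}
  | step (x a : C) (l : List (C × Multiset (Set C)))
      (hnr : ¬ IsRestingSet R (scc R x))
      (ha : a ∈ scc R x)
      (hr : ((({a} : Multiset C), (↑(l.map Prod.fst) : Multiset C)) : Rxn C) ∈ R)
      (hout : ∃ b ∈ l.map Prod.fst, b ∉ scc R x)
      (hf : ∀ p ∈ l, Fate R p.1 p.2) :
      Fate R x (l.map Prod.snd).sum

/-- B ~ F : the multiset B of complexes represents the multiset F of resting sets,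
i.e. there is a bijective matching pairing each b ∈ B with a Q ∈ F with b ∈ Q. -/
def Represents (B : Multiset C) (F : Multiset (Set C)) : Prop :=
  Multiset.Rel (fun b Q => b ∈ Q) B F

/-- F is a fate of the multiset P of complexes: F = F_1 + ... + F_n where
P = {b_1, ..., b_n} and Fate(b_i, F_i) for each i. -/
def FateM (R : Set (Rxn C)) (P : Multiset C) (F : Multiset (Set C)) : Prop :=
  ∃ l : List (C × Multiset (Set C)),
    P = (↑(l.map Prod.fst) : Multiset C) ∧
    F = (l.map Prod.snd).sum ∧
    ∀ p ∈ l, Fate R p.1 p.2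

/-- The condensed reactions: for each slow reaction ({a₁, a₂}, P) ∈ R and each fate F
of P, the condensed reaction ({SCC(a₁), SCC(a₂)}, F). -/
def IsCondensed (R : Set (Rxn C)) (Ahat Bhat : Multiset (Set C)) : Prop :=
  ∃ (a1 a2 : C) (P : Multiset C),
    ((({a1, a2} : Multiset C), P) : Rxn C) ∈ R ∧
    Ahat = ({scc R a1, scc R a2} : Multiset (Set C)) ∧
    FateM R P Bhat

/-- Every reaction in R is fast (unimolecular) or slow (bimolecular). -/
def FastOrSlow (R : Set (Rxn C)) : Prop :=
  ∀ r ∈ R, r.1.card = 1 ∨ r.1.card = 2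

/-- Reactants and products of every reaction are nonempty. -/
def NonemptyRxns (R : Set (Rxn C)) : Prop :=
  ∀ r ∈ R, r.1 ≠ 0 ∧ r.2 ≠ 0

/-- Property 3: every finite cyclic sequence of fast reactions, in which each reaction
consumes a product of the previous one (cyclically), consists of (1,1) reactions only. -/
def Prop3 (R : Set (Rxn C)) : Prop :=
  ∀ (n : ℕ) (hn : 0 < n) (r : Fin n → Rxn C),
    (∀ i, r i ∈ R ∧ (r i).1.card = 1) →
    (∀ i : Fin n, ∀ a ∈ (r ⟨(i.1 + 1) % n, Nat.mod_lt _ hn⟩).1, a ∈ (r i).2) →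
    ∀ i, (r i).2.card = 1

/-- Property 4: both reactants of every slow reaction are resting complexes. -/
def Prop4 (R : Set (Rxn C)) : Prop :=
  ∀ r ∈ R, r.1.card = 2 → ∀ a ∈ r.1, RestingComplex R a

/-- A resting-state transition from {a₁, a₂} to B: a slow reaction ({a₁, a₂}, P) ∈ R
followed by a fast transition from P to B. -/
def RestingTransition (R : Set (Rxn C)) (a1 a2 : C) (B : Multiset C) : Prop :=
  ∃ P : Multiset C, ((({a1, a2} : Multiset C), P) : Rxn C) ∈ R ∧ FastTransition R P B

/-- One step of a sequence of detailed reactions: remove the reactants of some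
reaction in R from the current multiset and add its products. -/
def DetailedStep (R : Set (Rxn C)) (M N : Multiset C) : Prop :=
  ∃ r ∈ R, ∃ M' : Multiset C, M = r.1 + M' ∧ N = r.2 + M'

/-- One step of a sequence of condensed reactions: remove the reactant multiset of a
condensed reaction from the current multiset of resting sets and add its products. -/
def CondensedStep (R : Set (Rxn C)) (M N : Multiset (Set C)) : Prop :=
  ∃ Ahat Bhat M' : Multiset (Set C),
    IsCondensed R Ahat Bhat ∧ M = Ahat + M' ∧ N = Bhat + M'

/-- Edge of the condensation digraph Γ': from SCC S to SCC S' (S ≠ S') whenever some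
fast reaction in R has its reactant in S and at least one product in S'. -/
def SccEdge (R : Set (Rxn C)) (S S' : Set C) : Prop :=
  S ≠ S' ∧ (∃ x, S = scc R x) ∧ (∃ y, S' = scc R y) ∧
    ∃ r ∈ R, r.1.card = 1 ∧ (∀ a ∈ r.1, a ∈ S) ∧ ∃ b ∈ r.2, b ∈ S'


/-! ### Auxiliary machinery for the acyclicity proof -/

/-- Link relation between reactions: `s` consumes only products of `r`. -/
def RLink {C : Type*} (r s : Rxn C) : Prop := ∀ a ∈ s.1, a ∈ r.2

/-- Turn a vertex path into the corresponding list of (1,1) reactions. -/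
def pathRxns {C : Type*} : C → List C → List (Rxn C)
  | _, [] => []
  | x, y :: l => ((({x} : Multiset C), ({y} : Multiset C)) : Rxn C) :: pathRxns y l

lemma pathRxns_eq_nil {C : Type*} {x : C} {l : List C} :
    pathRxns x l = [] ↔ l = [] := by
  cases l <;> simp [pathRxns]

lemma pathRxns_mem {C : Type*} {R : Set (Rxn C)} :
    ∀ {x : C} {l : List C}, List.Chain (FastEdge R) x l →
      ∀ s ∈ pathRxns x l, s ∈ R ∧ s.1.card = 1 ∧ s.2.card = 1 := by
  intro x l
  induction l generalizing x with
  | nil => intro _ s hs; simp [pathRxns] at hs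
  | cons y l ih =>
    intro hch s hs
    replace hch := List.isChain_cons_cons.mp hch
    rcases List.mem_cons.mp hs with hs | hs
    · subst hs; exact ⟨hch.1, by simp, by simp⟩
    · exact ih hch.2 s hs

lemma pathRxns_chain' {C : Type*} : ∀ {x : C} (l : List C),
    List.Chain' (RLink) (pathRxns x l) := by
  intro x l
  induction l generalizing x with
  | nil => exact List.IsChain.nil
  | cons y l ih =>
    cases l with
    | nil => exact List.IsChain.singleton _
    | cons z l =>
      refine List.isChain_cons_cons.mpr ⟨?_, ih (x := y)⟩
      intro a ha
      simp only [pathRxns] at ha ⊢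
      simpa using ha

lemma pathRxns_head? {C : Type*} {x : C} {l : List C} {s : Rxn C}
    (hs : s ∈ (pathRxns x l).head?) : s.1 = ({x} : Multiset C) := by
  cases l with
  | nil => simp [pathRxns] at hs
  | cons y l =>
    simp only [pathRxns, List.head?_cons, Option.mem_def, Option.some_inj] at hs
    subst hs; rfl

lemma pathRxns_getLast? {C : Type*} :
    ∀ {x : C} {l : List C} {s : Rxn C}, s ∈ (pathRxns x l).getLast? →
      s.2 = ({(x :: l).getLast (List.cons_ne_nil x l)} : Multiset C) := by
  intro x l
  induction l generalizing x with
  | nil => intro s hs; simp [pathRxns] at hs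
  | cons y l ih =>
    intro s hs
    cases l with
    | nil =>
      simp only [pathRxns, List.getLast?_singleton, Option.mem_def, Option.some_inj] at hs
      subst hs
      simp [List.getLast]
    | cons z l =>
      have h1 : pathRxns x (y :: z :: l) =
          ((({x} : Multiset C), ({y} : Multiset C)) : Rxn C) :: pathRxns y (z :: l) := rfl
      have h2 : pathRxns y (z :: l) =
          ((({y} : Multiset C), ({z} : Multiset C)) : Rxn C) :: pathRxns z l := rfl
      rw [h1, h2, List.getLast?_cons_cons, ← h2] at hs
      have := ih (x := y) hs
      rw [this]
      congr 1

lemma scc_eq_of_mem {C : Type*} {R : Set (Rxn C)} {x y : C}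
    (h : y ∈ scc R x) : scc R x = scc R y := by
  obtain ⟨hxy, hyx⟩ := h
  ext z
  constructor
  · rintro ⟨h1, h2⟩; exact ⟨hyx.trans h1, h2.trans hxy⟩
  · rintro ⟨h1, h2⟩; exact ⟨hxy.trans h1, h2.trans hyx⟩

/-- A cyclically-linked nonempty list of fast reactions consists of (1,1) reactions. -/
lemma cyclic_chain_card {C : Type*} {R : Set (Rxn C)} (h3 : Prop3 R)
    (L : List (Rxn C)) (hL : L ≠ [])
    (hfast : ∀ s ∈ L, s ∈ R ∧ s.1.card = 1)
    (hchain : List.Chain' (RLink) L)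
    (hwrap : RLink (L.getLast hL) (L.head hL)) :
    ∀ s ∈ L, s.2.card = 1 := by
  have hn : 0 < L.length := List.length_pos_iff.mpr hL
  have key := h3 L.length hn (fun i => L.get i)
    (fun i => hfast _ (L.get_mem _))
    (by
      intro i a ha
      by_cases hi : i.1 + 1 < L.length
      · have hmod : (i.1 + 1) % L.length = i.1 + 1 := Nat.mod_eq_of_lt hi
        have hfin : (⟨(i.1 + 1) % L.length, Nat.mod_lt _ hn⟩ : Fin L.length) =
            ⟨i.1 + 1, hi⟩ := Fin.ext hmod
        rw [hfin] at ha
        exact List.isChain_iff_getElem.mp hchain i.1 (by omega) a ha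
      · have hi1 : i.1 + 1 = L.length := by omega
        have hmod : (i.1 + 1) % L.length = 0 := by rw [hi1]; exact Nat.mod_self _
        have hfin0 : (⟨(i.1 + 1) % L.length, Nat.mod_lt _ hn⟩ : Fin L.length) =
            ⟨0, hn⟩ := Fin.ext hmod
        have hhead : L.get ⟨0, hn⟩ = L.head hL := by
          cases L with
          | nil => exact absurd rfl hL
          | cons r L => rfl
        have hlast : L.get i = L.getLast hL := by
          simp only [List.getLast_eq_getElem, List.get_eq_getElem]
          congr 1
          omega
        rw [hfin0] at ha
        have ha' : a ∈ (L.head hL).1 := by rw [← hhead]; exact ha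
        show a ∈ (L.get i).2
        rw [hlast]
        exact hwrap a ha')
  intro s hs
  obtain ⟨i, hi⟩ := List.get_of_mem hs
  rw [← hi]
  exact key i

/-- Data extracted from a path of SCC edges. -/
lemma exists_cycle_data {C : Type*} {R : Set (Rxn C)} {S T : Set C}
    (h : Relation.TransGen (SccEdge R) S T) :
    ∃ (a b c : C) (r : Rxn C) (L : List (Rxn C)),
      r ∈ R ∧ r.1 = ({a} : Multiset C) ∧ b ∈ r.2 ∧ S = scc R a ∧ scc R a ≠ scc R b ∧
      (∀ s ∈ L, s ∈ R ∧ s.1.card = 1) ∧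
      List.Chain' (RLink) (r :: L) ∧
      c ∈ ((r :: L).getLast (List.cons_ne_nil r L)).2 ∧
      c ∈ T ∧
      ((∀ s ∈ L, s.2.card = 1) → Reach R b c) := by
  induction h with
  | single hST =>
    rename_i T'
    obtain ⟨hne, ⟨x, hSx⟩, ⟨y, hTy⟩, r, hr, hcard, hreact, b, hb2, hbT⟩ := hST
    obtain ⟨a, ha⟩ := Multiset.card_eq_one.mp hcard
    have haS : a ∈ S := hreact a (by rw [ha]; exact Multiset.mem_singleton_self a)
    have hSa : S = scc R a := by
      rw [hSx]; exact scc_eq_of_mem (hSx ▸ haS)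
    have hTb : T' = scc R b := by
      rw [hTy]; exact scc_eq_of_mem (hTy ▸ hbT)
    refine ⟨a, b, b, r, [], hr, ha, hb2, hSa, ?_, by simp, by exact List.IsChain.singleton _, ?_, hbT, ?_⟩
    · rw [← hSa, ← hTb]; exact hne
    · simpa using hb2
    · intro _; exact Relation.ReflTransGen.refl
  | tail hST' hE ih =>
    obtain ⟨a, b, c, r, L, hrR, hr1, hb2, hSa, hne', hLfast, hLchain, hclast, hcT, hH⟩ := ih
    obtain ⟨hneTU, ⟨x, hTx⟩, ⟨y, hUy⟩, r', hr'R, hcard', hreact', b', hb'2, hb'U⟩ := hE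
    obtain ⟨a', ha'⟩ := Multiset.card_eq_one.mp hcard'
    have ha'T : a' ∈ _ := hreact' a' (by rw [ha']; exact Multiset.mem_singleton_self a')
    have hreach_ca' : Reach R c a' := by
      rw [hTx] at hcT ha'T
      exact hcT.2.trans ha'T.1
    obtain ⟨l, hlchain, hllast⟩ := List.exists_isChain_cons_of_relationReflTransGen hreach_ca'
    refine ⟨a, b, b', r, L ++ pathRxns c l ++ [r'], hrR, hr1, hb2, hSa, hne', ?_, ?_, ?_, hb'U, ?_⟩
    · intro s hs
      simp only [List.mem_append, List.mem_singleton] at hs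
      rcases hs with (hs | hs) | hs
      · exact hLfast s hs
      · have := pathRxns_mem hlchain s hs; exact ⟨this.1, this.2.1⟩
      · subst hs; exact ⟨hr'R, by rw [ha']; simp⟩
    · have heq : r :: (L ++ pathRxns c l ++ [r']) =
          ((r :: L) ++ pathRxns c l) ++ [r'] := by simp
      rw [heq]
      refine List.IsChain.append ?_ (by simp) ?_
      · refine List.IsChain.append hLchain (pathRxns_chain' l) ?_
        intro u hu v hv
        rw [List.getLast?_eq_getLast (List.cons_ne_nil r L)] at hu
        simp only [Option.mem_def, Option.some_inj] at hu
        subst hu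
        intro z hz
        rw [pathRxns_head? hv, Multiset.mem_singleton] at hz
        subst hz
        exact hclast
      · intro u hu v hv
        simp only [List.head?_cons, Option.mem_def, Option.some_inj] at hv
        subst hv
        intro z hz
        rw [ha', Multiset.mem_singleton] at hz
        subst hz
        by_cases hP : pathRxns c l = []
        · rw [hP, List.append_nil,
            List.getLast?_eq_getLast (List.cons_ne_nil r L)] at hu
          simp only [Option.mem_def, Option.some_inj] at hu
          subst hu
          have hl : l = [] := pathRxns_eq_nil.mp hP
          subst hl
          simp only [List.getLast_singleton] at hllast
          rw [← hllast]
          exact hclast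
        · rw [List.getLast?_append_of_ne_nil _ hP] at hu
          rw [pathRxns_getLast? hu, hllast]
          exact Multiset.mem_singleton_self _
    · have heq : r :: (L ++ pathRxns c l ++ [r']) =
          ((r :: L) ++ pathRxns c l) ++ [r'] := by simp
      have h2 : (r :: (L ++ pathRxns c l ++ [r'])).getLast? = some r' := by
        rw [heq, List.getLast?_append_of_ne_nil _ (by simp : ([r'] : List (Rxn C)) ≠ [])]
        simp
      have h1 := List.getLast?_eq_getLast (l := r :: (L ++ pathRxns c l ++ [r']))
        (List.cons_ne_nil _ _)
      have hfull := Option.some_inj.mp (h1.symm.trans h2)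
      rw [hfull]
      exact hb'2
    · intro hall
      have h1 : Reach R b c := hH (fun s hs => hall s (by simp [hs]))
      have hr'card : r'.2.card = 1 := hall r' (by simp)
      obtain ⟨z, hz⟩ := Multiset.card_eq_one.mp hr'card
      have hzb : z = b' := by
        rw [hz, Multiset.mem_singleton] at hb'2; exact hb'2.symm
      have hr'eq : ((({a'} : Multiset C), ({b'} : Multiset C)) : Rxn C) = r' := by
        rw [← ha', ← hzb, ← hz]
      have hfab : FastEdge R a' b' := by
        show _ ∈ R
        rw [hr'eq]; exact hr'R
      exact (h1.trans hreach_ca').trans (Relation.ReflTransGen.single hfab)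

/-- Assuming Property 3, the condensation digraph Γ' on the SCCs of Γ is acyclic. -/
theorem sccGraph_acyclic {C : Type*} [Fintype C] (R : Set (Rxn C))
    (hRfin : R.Finite) (hne : NonemptyRxns R) (h3 : Prop3 R) :
    ∀ S : Set C, ¬ Relation.TransGen (SccEdge R) S S := by
  intro S hcyc
  obtain ⟨a, b, c, r, L, hrR, hr1, hb2, hSa, hne', hLfast, hLchain, hclast, hcS, hH⟩ :=
    exists_cycle_data hcyc
  have hca : Reach R c a := by rw [hSa] at hcS; exact hcS.2
  obtain ⟨l, hlchain, hllast⟩ := List.exists_isChain_cons_of_relationReflTransGen hca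
  have hllast' : (c :: l).getLast (List.cons_ne_nil c l) = a := hllast
  have hLLne : (r :: L) ++ pathRxns c l ≠ [] := by simp
  have hfastLL : ∀ s ∈ (r :: L) ++ pathRxns c l, s ∈ R ∧ s.1.card = 1 := by
    intro s hs
    rw [List.mem_append] at hs
    rcases hs with hs | hs
    · rcases List.mem_cons.mp hs with hs | hs
      · subst hs; exact ⟨hrR, by rw [hr1]; simp⟩
      · exact hLfast s hs
    · have := pathRxns_mem hlchain s hs; exact ⟨this.1, this.2.1⟩
  have hchainLL : List.Chain' (RLink) ((r :: L) ++ pathRxns c l) := by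
    refine List.IsChain.append hLchain (pathRxns_chain' l) ?_
    intro u hu v hv
    rw [List.getLast?_eq_getLast (List.cons_ne_nil r L)] at hu
    simp only [Option.mem_def, Option.some_inj] at hu
    subst hu
    intro z hz
    rw [pathRxns_head? hv, Multiset.mem_singleton] at hz
    subst hz
    exact hclast
  have hhead : ((r :: L) ++ pathRxns c l).head hLLne = r := rfl
  have hlastmem : a ∈ (((r :: L) ++ pathRxns c l).getLast hLLne).2 := by
    by_cases hP : pathRxns c l = []
    · have hl : l = [] := pathRxns_eq_nil.mp hP
      subst hl
      have hca' : c = a := by simpa using hllast'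
      have h2 : ((r :: L) ++ pathRxns c ([] : List C)).getLast? =
          some ((r :: L).getLast (List.cons_ne_nil r L)) := by
        rw [hP, List.append_nil]
        exact List.getLast?_eq_getLast _
      have h1 := List.getLast?_eq_getLast (l := (r :: L) ++ pathRxns c ([] : List C)) hLLne
      have heq := Option.some_inj.mp (h1.symm.trans h2)
      rw [heq, ← hca']
      exact hclast
    · have h1 := List.getLast?_eq_getLast (l := (r :: L) ++ pathRxns c l) hLLne
      have h2 : (((r :: L) ++ pathRxns c l).getLast hLLne) ∈ (pathRxns c l).getLast? := by
        rw [← List.getLast?_append_of_ne_nil (r :: L) hP]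
        exact h1
      have h3 := pathRxns_getLast? h2
      rw [h3, hllast']
      exact Multiset.mem_singleton_self a
  have hwrap : RLink (((r :: L) ++ pathRxns c l).getLast hLLne)
      (((r :: L) ++ pathRxns c l).head hLLne) := by
    rw [hhead]
    intro z hz
    rw [hr1, Multiset.mem_singleton] at hz
    subst hz
    exact hlastmem
  have hall := cyclic_chain_card h3 _ hLLne hfastLL hchainLL hwrap
  have hrcard : r.2.card = 1 := hall r (by simp)
  obtain ⟨z, hz⟩ := Multiset.card_eq_one.mp hrcard
  have hzb : z = b := by rw [hz, Multiset.mem_singleton] at hb2; exact hb2.symm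
  have hreq : ((({a} : Multiset C), ({b} : Multiset C)) : Rxn C) = r := by
    rw [← hr1, ← hzb, ← hz]
  have hfab : FastEdge R a b := by
    show _ ∈ R
    rw [hreq]; exact hrR
  have hbc : Reach R b c := hH (fun s hs => hall s (by simp [hs]))
  have hmem : b ∈ scc R a :=
    ⟨Relation.ReflTransGen.single hfab, hbc.trans hca⟩
  exact hne' (scc_eq_of_mem hmem)
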